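/- Let N be a weakly classical 1-absorbing prime submodule of M and suppose (a, b, c, m) is a classical 1-quadruple-zero of N for some nonunits a, b, c ∈ R and m ∈ M. Then abcn = 0 for every n ∈ N, and abxm = 0 for every x ∈ (N :_R M). -/
import Mathlib


/-- A proper submodule `N` of `M` is weakly classical 1-absorbing prime if whenever
`abcm ∈ N` and `abcm ≠ 0` for nonunits `a, b, c ∈ R` and `m ∈ M`, then `abm ∈ N` or `cm ∈ N`. -/
def IsWeaklyClassical1AbsorbingPrime {R : Type*} [CommRing R] {M : Type*} [AddCommGroup M]
    [Module R M] (N : Submodule R M) : Prop :=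
  N ≠ ⊤ ∧ ∀ a b c : R, ∀ m : M, ¬ IsUnit a → ¬ IsUnit b → ¬ IsUnit c →
    (a * b * c) • m ∈ N → (a * b * c) • m ≠ 0 → ((a * b) • m ∈ N ∨ c • m ∈ N)

/-- A proper ideal `I` of `R` is weakly 1-absorbing prime if whenever `abc ∈ I` and
`abc ≠ 0` for nonunits `a, b, c ∈ R`, then `ab ∈ I` or `c ∈ I`. -/
def IsWeakly1AbsorbingPrimeIdeal {R : Type*} [CommRing R] (I : Ideal R) : Prop :=
  I ≠ ⊤ ∧ ∀ a b c : R, ¬ IsUnit a → ¬ IsUnit b → ¬ IsUnit c →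
    a * b * c ∈ I → a * b * c ≠ 0 → (a * b ∈ I ∨ c ∈ I)

/-- For nonunits `a, b, c ∈ R` and `m ∈ M`, the tuple `(a, b, c, m)` is a classical
1-quadruple-zero of `N` if `abcm = 0`, `abm ∉ N` and `cm ∉ N`. -/
def IsClassical1QuadrupleZero {R : Type*} [CommRing R] {M : Type*} [AddCommGroup M]
    [Module R M] (N : Submodule R M) (a b c : R) (m : M) : Prop :=
  ¬ IsUnit a ∧ ¬ IsUnit b ∧ ¬ IsUnit c ∧ (a * b * c) • m = 0 ∧
    (a * b) • m ∉ N ∧ c • m ∉ N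

/-- If `N` is weakly classical 1-absorbing prime and `(a, b, c, m)` is a
classical 1-quadruple-zero of `N`, then `abcN = 0` and `ab(N :_R M)m = 0`. -/
theorem stmt_13 {R : Type*} [CommRing R] [Nontrivial R] {M : Type*} [AddCommGroup M]
    [Module R M] [Nontrivial M] (N : Submodule R M)
    (hN : IsWeaklyClassical1AbsorbingPrime N) (a b c : R) (m : M)
    (hquad : IsClassical1QuadrupleZero N a b c m) :
    (∀ n ∈ N, (a * b * c) • n = 0) ∧ (∀ x ∈ N.colon ⊤, (a * b * x) • m = 0) := by
  obtain ⟨ha, hb, hc, habc, habm, hcm⟩ := hquad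
  obtain ⟨hNtop, hwc⟩ := hN
  constructor
  · intro n hn
    by_contra h0
    have hmem : (a*b*c) • (m+n) ∈ N := by
      rw [smul_add, habc, zero_add]; exact N.smul_mem _ hn
    have hne : (a*b*c) • (m+n) ≠ 0 := by
      rw [smul_add, habc, zero_add]; exact h0
    rcases hwc a b c (m+n) ha hb hc hmem hne with h | h
    · refine habm ?_
      have e : (a*b) • m = (a*b)•(m+n) - (a*b)•n := by rw [smul_add]; abel
      rw [e]; exact N.sub_mem h (N.smul_mem _ hn)
    · refine hcm ?_
      have e : c • m = c•(m+n) - c•n := by rw [smul_add]; abel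
      rw [e]; exact N.sub_mem h (N.smul_mem _ hn)
  · intro x hx
    have hxm : x • m ∈ N := Submodule.mem_colon.mp hx m trivial
    by_contra h0
    have key : (a*b*(c+x)) • m = (a*b*x) • m := by
      rw [mul_add, add_smul, habc, zero_add]
    have hmem : (a*b*(c+x)) • m ∈ N := by
      rw [key, mul_smul]; exact N.smul_mem _ hxm
    have hne : (a*b*(c+x)) • m ≠ 0 := by rw [key]; exact h0
    by_cases hcx : IsUnit (c+x)
    · obtain ⟨u, hu⟩ := hcx
      refine habm ?_
      have e : (↑u⁻¹ : R) * (a*b*(c+x)) = a*b := by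
        rw [← hu]
        calc (↑u⁻¹ : R) * (a*b*↑u) = a*b*(↑u⁻¹*↑u) := by ring
          _ = a*b := by rw [u.inv_mul, mul_one]
      have := N.smul_mem (↑u⁻¹ : R) hmem
      rwa [smul_smul, e] at this
    · rcases hwc a b (c+x) m ha hb hcx hmem hne with h | h
      · exact habm h
      · refine hcm ?_
        have e : c • m = (c+x)•m - x•m := by rw [add_smul]; abel
        rw [e]; exact N.sub_mem h hxm
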